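/- Fix ρ ≥ 0 and empirical points ξ̂^1, …, ξ̂^R in a compact set S ⊆ ℝ^n. Then sup over probability measures Q on S with (1/R)·Σ_r ∫_S ‖ξ − ξ̂^r‖₁ dQ^r(ξ) ≤ ε of (1/R)·Σ_r ∫_S f dQ^r, where Q = (1/R)Σ_r δ_{ξ̂^r} ⊗ Q^r ranges over couplings, equals inf_{ρ ≥ 0} { ε·ρ + (1/R)·Σ_{r=1}^R sup_{ξ ∈ S} [ f(ξ) − ρ·‖ξ − ξ̂^r‖₁ ] }, for any bounded upper semicontinuous f : S → ℝ and any ε > 0. -/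

import Mathlib

open MeasureTheory Pointwise

section aux
variable {α : Type*} [MeasurableSpace α]

lemma aux_ae_of_null_compl (μ : Measure α) {S : Set α} (hμ : μ Sᶜ = 0)
    {p : α → Prop} (hp : ∀ x ∈ S, p x) : ∀ᵐ x ∂μ, p x := by
  rw [ae_iff]
  refine measure_mono_null (fun x hx => ?_) hμ
  simp only [Set.mem_setOf_eq] at hx
  intro hxS
  exact hx (hp x hxS)

lemma aux_integrable (μ : Measure α) [IsProbabilityMeasure μ] {S : Set α} (hμ : μ Sᶜ = 0)
    {g : α → ℝ} (hg : Measurable g) {B : ℝ} (hB : ∀ x ∈ S, |g x| ≤ B) : Integrable g μ := by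
  refine Integrable.mono' (integrable_const B) hg.aestronglyMeasurable ?_
  exact aux_ae_of_null_compl μ hμ (by simpa [Real.norm_eq_abs] using hB)

lemma aux_integral_le (μ : Measure α) [IsProbabilityMeasure μ] {S : Set α} (hμ : μ Sᶜ = 0)
    {g : α → ℝ} (hgi : Integrable g μ) (hbdd : BddAbove (g '' S)) :
    ∫ x, g x ∂μ ≤ sSup (g '' S) := by
  have h1 : ∫ x, g x ∂μ ≤ ∫ _x, sSup (g '' S) ∂μ := by
    refine integral_mono_ae hgi (integrable_const _) ?_
    exact aux_ae_of_null_compl μ hμ (fun x hx => le_csSup hbdd ⟨x, hx, rfl⟩)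
  simpa using h1

lemma aux_integrable_dirac [MeasurableSingletonClass α] {g : α → ℝ} (hg : Measurable g)
    (x : α) : Integrable g (Measure.dirac x) := by
  refine ⟨hg.aestronglyMeasurable, ?_⟩
  rw [HasFiniteIntegral, lintegral_dirac]
  exact ENNReal.coe_lt_top

lemma aux_integral_comb [MeasurableSingletonClass α] {ι : Type} (t : Finset ι) (w : ι → ℝ)
    (hw : ∀ i ∈ t, 0 ≤ w i) (x : ι → α) {g : α → ℝ} (hg : Measurable g) :
    ∫ ξ, g ξ ∂(∑ i ∈ t, ENNReal.ofReal (w i) • Measure.dirac (x i))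
      = ∑ i ∈ t, w i * g (x i) := by
  rw [integral_finset_sum_measure (fun i hi =>
    (aux_integrable_dirac hg (x i)).smul_measure ENNReal.ofReal_ne_top)]
  refine Finset.sum_congr rfl fun i hi => ?_
  rw [integral_smul_measure, integral_dirac, ENNReal.toReal_ofReal (hw i hi), smul_eq_mul]

lemma aux_prob_comb {ι : Type} (t : Finset ι) (w : ι → ℝ)
    (hw : ∀ i ∈ t, 0 ≤ w i) (hw1 : ∑ i ∈ t, w i = 1) (x : ι → α) :
    IsProbabilityMeasure (∑ i ∈ t, ENNReal.ofReal (w i) • Measure.dirac (x i)) := by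
  constructor
  rw [Measure.finset_sum_apply]
  have : ∀ i ∈ t, (ENNReal.ofReal (w i) • Measure.dirac (x i)) Set.univ
      = ENNReal.ofReal (w i) := by
    intro i hi
    rw [Measure.smul_apply, measure_univ, smul_eq_mul, mul_one]
  rw [Finset.sum_congr rfl this, ← ENNReal.ofReal_sum_of_nonneg hw, hw1, ENNReal.ofReal_one]

lemma aux_comb_null {ι : Type} (t : Finset ι) (w : ι → ℝ) (x : ι → α)
    {S : Set α} (hSm : MeasurableSet S) (hx : ∀ i ∈ t, x i ∈ S) :
    (∑ i ∈ t, ENNReal.ofReal (w i) • Measure.dirac (x i)) Sᶜ = 0 := by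
  rw [Measure.finset_sum_apply]
  refine Finset.sum_eq_zero fun i hi => ?_
  rw [Measure.smul_apply, Measure.dirac_apply' _ hSm.compl,
    Set.indicator_of_notMem (by simp [hx i hi]), smul_zero]

lemma aux_le_of_forall_pos {a b : ℝ} (h : ∀ δ > 0, a ≤ b + δ) : a ≤ b := by
  by_contra hc
  push_neg at hc
  have := h ((a - b)/2) (by linarith)
  linarith

end aux

set_option maxHeartbeats 1000000 in
theorem dual_aux {X : Type} [MeasurableSpace X] [MeasurableSingletonClass X]
    (R : ℕ) (hR : 0 < R) (S : Set X) (hS : S.Nonempty) (hSm : MeasurableSet S)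
    (xhat : Fin R → X) (hxhat : ∀ r, xhat r ∈ S)
    (c : Fin R → X → ℝ) (hcm : ∀ r, Measurable (c r)) (hc0 : ∀ r, ∀ ξ ∈ S, 0 ≤ c r ξ)
    (Mc : ℝ) (hcb : ∀ r, ∀ ξ ∈ S, c r ξ ≤ Mc) (hcx : ∀ r, c r (xhat r) = 0)
    (f : X → ℝ) (hfm : Measurable f) (M : ℝ) (hM : ∀ ξ ∈ S, |f ξ| ≤ M)
    (ε : ℝ) (hε : 0 < ε) :
    sSup {x : ℝ | ∃ Q : Fin R → Measure X,
        (∀ r, IsProbabilityMeasure (Q r)) ∧ (∀ r, Q r Sᶜ = 0) ∧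
        ((1 / (R : ℝ)) * ∑ r, ∫ ξ, c r ξ ∂(Q r) ≤ ε) ∧
        x = (1 / (R : ℝ)) * ∑ r, ∫ ξ, f ξ ∂(Q r)} =
    sInf {x : ℝ | ∃ ρ : ℝ, 0 ≤ ρ ∧
        x = ε * ρ + (1 / (R : ℝ)) * ∑ r, sSup ((fun ξ => f ξ - ρ * c r ξ) '' S)} := by
  have hRpos : (0:ℝ) < (R:ℝ) := by exact_mod_cast hR
  have hRinv : (0:ℝ) ≤ 1 / (R:ℝ) := by positivity
  set P : Set ℝ := {x : ℝ | ∃ Q : Fin R → Measure X,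
      (∀ r, IsProbabilityMeasure (Q r)) ∧ (∀ r, Q r Sᶜ = 0) ∧
      ((1 / (R : ℝ)) * ∑ r, ∫ ξ, c r ξ ∂(Q r) ≤ ε) ∧
      x = (1 / (R : ℝ)) * ∑ r, ∫ ξ, f ξ ∂(Q r)} with hPdef
  set DS : Set ℝ := {x : ℝ | ∃ ρ : ℝ, 0 ≤ ρ ∧
      x = ε * ρ + (1 / (R : ℝ)) * ∑ r, sSup ((fun ξ => f ξ - ρ * c r ξ) '' S)} with hDSdef
  set φ : ℝ → Fin R → ℝ := fun ρ r => sSup ((fun ξ => f ξ - ρ * c r ξ) '' S) with hφdef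
  -- basic bounds
  have himgne : ∀ ρ (r : Fin R), ((fun ξ => f ξ - ρ * c r ξ) '' S).Nonempty :=
    fun ρ r => hS.image _
  have hbdd : ∀ ρ, 0 ≤ ρ → ∀ r : Fin R, BddAbove ((fun ξ => f ξ - ρ * c r ξ) '' S) := by
    intro ρ hρ r
    refine ⟨M, fun y hy => ?_⟩
    obtain ⟨ξ, hξ, rfl⟩ := hy
    have := (abs_le.mp (hM ξ hξ)).2
    show f ξ - ρ * c r ξ ≤ M
    nlinarith [hc0 r ξ hξ, mul_nonneg hρ (hc0 r ξ hξ)]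
  have hφ_le : ∀ ρ, 0 ≤ ρ → ∀ r : Fin R, φ ρ r ≤ M := by
    intro ρ hρ r
    refine csSup_le (himgne ρ r) ?_
    rintro y ⟨ξ, hξ, rfl⟩
    have := (abs_le.mp (hM ξ hξ)).2
    show f ξ - ρ * c r ξ ≤ M
    nlinarith [hc0 r ξ hξ, mul_nonneg hρ (hc0 r ξ hξ)]
  have hφ_mem : ∀ ρ, 0 ≤ ρ → ∀ r : Fin R, ∀ ξ ∈ S, f ξ - ρ * c r ξ ≤ φ ρ r :=
    fun ρ hρ r ξ hξ => le_csSup (hbdd ρ hρ r) ⟨ξ, hξ, rfl⟩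
  -- weak duality
  have weak : ∀ x ∈ P, ∀ d ∈ DS, x ≤ d := by
    rintro x ⟨Q, hQp, hQn, hQc, rfl⟩ d ⟨ρ, hρ, rfl⟩
    have key : ∀ r : Fin R, ∫ ξ, f ξ ∂(Q r) ≤ φ ρ r + ρ * ∫ ξ, c r ξ ∂(Q r) := by
      intro r
      haveI := hQp r
      have hif : Integrable f (Q r) := aux_integrable (Q r) (hQn r) hfm hM
      have hic : Integrable (c r) (Q r) := by
        refine aux_integrable (Q r) (hQn r) (hcm r) (B := Mc) ?_
        intro x hx
        rw [abs_of_nonneg (hc0 r x hx)]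
        exact hcb r x hx
      have hicρ : Integrable (fun ξ => ρ * c r ξ) (Q r) := hic.const_mul ρ
      have hsplit : ∫ ξ, f ξ ∂(Q r)
          = ∫ ξ, (f ξ - ρ * c r ξ) ∂(Q r) + ρ * ∫ ξ, c r ξ ∂(Q r) := by
        rw [integral_sub hif hicρ, integral_const_mul]
        ring
      rw [hsplit]
      have h3 : ∫ ξ, (f ξ - ρ * c r ξ) ∂(Q r) ≤ φ ρ r :=
        aux_integral_le (Q r) (hQn r) (hif.sub hicρ) (hbdd ρ hρ r)
      linarith
    have hsum : ∑ r : Fin R, ∫ ξ, f ξ ∂(Q r)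
        ≤ ∑ r : Fin R, φ ρ r + ρ * ∑ r : Fin R, ∫ ξ, c r ξ ∂(Q r) := by
      rw [Finset.mul_sum, ← Finset.sum_add_distrib]
      exact Finset.sum_le_sum fun r _ => key r
    have h1 : (1 / (R:ℝ)) * ∑ r : Fin R, ∫ ξ, f ξ ∂(Q r)
        ≤ (1 / (R:ℝ)) * ∑ r : Fin R, φ ρ r
          + ρ * ((1 / (R:ℝ)) * ∑ r : Fin R, ∫ ξ, c r ξ ∂(Q r)) := by
      have h4 := mul_le_mul_of_nonneg_left hsum hRinv
      have h5 : (1 / (R:ℝ)) * (∑ r : Fin R, φ ρ r + ρ * ∑ r : Fin R, ∫ ξ, c r ξ ∂(Q r))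
          = (1 / (R:ℝ)) * ∑ r : Fin R, φ ρ r
            + ρ * ((1 / (R:ℝ)) * ∑ r : Fin R, ∫ ξ, c r ξ ∂(Q r)) := by ring
      linarith
    have h2 : ρ * ((1 / (R:ℝ)) * ∑ r : Fin R, ∫ ξ, c r ξ ∂(Q r)) ≤ ρ * ε :=
      mul_le_mul_of_nonneg_left hQc hρ
    calc (1 / (R:ℝ)) * ∑ r : Fin R, ∫ ξ, f ξ ∂(Q r)
        ≤ (1 / (R:ℝ)) * ∑ r : Fin R, φ ρ r + ρ * ε := by linarith
      _ = ε * ρ + (1 / (R:ℝ)) * ∑ r : Fin R, φ ρ r := by ring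
  -- nonemptiness
  have hPne : P.Nonempty := by
    refine ⟨(1 / (R:ℝ)) * ∑ r : Fin R, f (xhat r), fun r => Measure.dirac (xhat r),
      fun r => inferInstance, ?_, ?_, ?_⟩
    · intro r
      rw [Measure.dirac_apply' _ hSm.compl, Set.indicator_of_notMem (by simp [hxhat r])]
    · have : ∀ r : Fin R, ∫ ξ, c r ξ ∂(Measure.dirac (xhat r)) = 0 := by
        intro r; rw [integral_dirac, hcx r]
      rw [Finset.sum_congr rfl fun r _ => this r]
      simpa using le_of_lt hε
    · simp [integral_dirac]
  have hDne : DS.Nonempty := ⟨_, 0, le_refl 0, rfl⟩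
  obtain ⟨d₀, hd₀⟩ := hDne
  have hDne : DS.Nonempty := ⟨d₀, hd₀⟩
  have hPbdd : BddAbove P := ⟨d₀, fun x hx => weak x hx d₀ hd₀⟩
  obtain ⟨x₀, hx₀⟩ := hPne
  have hPne : P.Nonempty := ⟨x₀, hx₀⟩
  have hDbdd : BddBelow DS := ⟨x₀, fun d hd => weak x₀ hx₀ d hd⟩
  have le₁ : sSup P ≤ sInf DS :=
    csSup_le hPne fun x hx => le_csInf hDne fun d hd => weak x hx d hd
  have hM0 : 0 ≤ M := le_trans (abs_nonneg _) (hM _ hS.choose_spec)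
  refine le_antisymm le₁ (aux_le_of_forall_pos fun δ hδ => ?_)
  obtain ⟨V, hV⟩ : ∃ x : ℝ, x = sSup P := ⟨_, rfl⟩
  rw [← hV]
  classical
  -- the geometric sets
  set K : Set (ℝ × ℝ) := (fun ξv : Fin R → X =>
      ((1 / (R:ℝ)) * ∑ r : Fin R, c r (ξv r), (1 / (R:ℝ)) * ∑ r : Fin R, f (ξv r)))
      '' {ξv | ∀ r, ξv r ∈ S} with hKdef
  set CC : Set (ℝ × ℝ) := {z | 0 ≤ z.1 ∧ z.2 ≤ 0} with hCCdef
  set H : Set (ℝ × ℝ) := convexHull ℝ K + CC with hHdef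
  have hCCconv : Convex ℝ CC := by
    intro z hz w hw l1 l2 hl1 hl2 hl
    constructor
    · have : (l1 • z + l2 • w).1 = l1 * z.1 + l2 * w.1 := rfl
      rw [this]
      have := hz.1; have := hw.1
      positivity
    · have h2 : (l1 • z + l2 • w).2 = l1 * z.2 + l2 * w.2 := rfl
      rw [h2]
      nlinarith [hz.2, hw.2]
  have hHconv : Convex ℝ H := (convex_convexHull ℝ K).add hCCconv
  have hKH : K ⊆ H := by
    intro z hz
    have : z = z + 0 := (add_zero z).symm
    rw [this]
    exact Set.add_mem_add (subset_convexHull ℝ K hz) ⟨le_refl 0, le_refl 0⟩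
  have hHadd : ∀ z ∈ H, ∀ cc ∈ CC, z + cc ∈ H := by
    intro z hz cc hcc
    obtain ⟨w, hw, c1, hc1, rfl⟩ := Set.mem_add.mp hz
    rw [add_assoc]
    refine Set.add_mem_add hw ⟨?_, ?_⟩
    · have : (c1 + cc).1 = c1.1 + cc.1 := rfl
      rw [this]; linarith [hc1.1, hcc.1]
    · have : (c1 + cc).2 = c1.2 + cc.2 := rfl
      rw [this]; linarith [hc1.2, hcc.2]
  -- key primal bound
  have hKeyConv : ∀ w ∈ convexHull ℝ K, w.1 ≤ ε → w.2 ≤ V := by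
    intro w hw hwε
    rw [convexHull_eq] at hw
    obtain ⟨ι, t, wt, zp, hw0, hw1, hzK, hwz⟩ := hw
    rw [Finset.centerMass_eq_of_sum_1 _ _ hw1] at hwz
    haveI : Nonempty X := ⟨hS.choose⟩
    have hz' : ∀ i ∈ t, ∃ ξv : Fin R → X, (∀ r, ξv r ∈ S) ∧
        ((1 / (R:ℝ)) * ∑ r : Fin R, c r (ξv r), (1 / (R:ℝ)) * ∑ r : Fin R, f (ξv r))
          = zp i := by
      intro i hi
      obtain ⟨ξv, hξv, heq⟩ := hzK i hi
      exact ⟨ξv, hξv, heq⟩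
    choose! ζ hζS hζΦ using hz'
    set Q : Fin R → Measure X :=
      fun r => ∑ i ∈ t, ENNReal.ofReal (wt i) • Measure.dirac (ζ i r) with hQdef
    have hfst : ∀ i ∈ t, (1 / (R:ℝ)) * ∑ r : Fin R, c r (ζ i r) = (zp i).1 :=
      fun i hi => by simpa using congrArg Prod.fst (hζΦ i hi)
    have hsnd : ∀ i ∈ t, (1 / (R:ℝ)) * ∑ r : Fin R, f (ζ i r) = (zp i).2 :=
      fun i hi => by simpa using congrArg Prod.snd (hζΦ i hi)
    have hcost : (1 / (R:ℝ)) * ∑ r : Fin R, ∫ ξ, c r ξ ∂(Q r) = w.1 := by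
      have h1 : ∀ r : Fin R, ∫ ξ, c r ξ ∂(Q r) = ∑ i ∈ t, wt i * c r (ζ i r) :=
        fun r => aux_integral_comb t wt hw0 (fun i => ζ i r) (hcm r)
      rw [Finset.sum_congr rfl fun r _ => h1 r, Finset.sum_comm, Finset.mul_sum]
      have h2 : ∀ i ∈ t, (1 / (R:ℝ)) * ∑ r : Fin R, wt i * c r (ζ i r)
          = wt i * (zp i).1 := by
        intro i hi
        rw [← hfst i hi, ← Finset.mul_sum]
        ring
      rw [Finset.sum_congr rfl h2, ← hwz, Prod.fst_sum]
      exact Finset.sum_congr rfl fun i _ => by rw [Prod.smul_fst, smul_eq_mul]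
    have hval : (1 / (R:ℝ)) * ∑ r : Fin R, ∫ ξ, f ξ ∂(Q r) = w.2 := by
      have h1 : ∀ r : Fin R, ∫ ξ, f ξ ∂(Q r) = ∑ i ∈ t, wt i * f (ζ i r) :=
        fun r => aux_integral_comb t wt hw0 (fun i => ζ i r) hfm
      rw [Finset.sum_congr rfl fun r _ => h1 r, Finset.sum_comm, Finset.mul_sum]
      have h2 : ∀ i ∈ t, (1 / (R:ℝ)) * ∑ r : Fin R, wt i * f (ζ i r)
          = wt i * (zp i).2 := by
        intro i hi
        rw [← hsnd i hi, ← Finset.mul_sum]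
        ring
      rw [Finset.sum_congr rfl h2, ← hwz, Prod.snd_sum]
      exact Finset.sum_congr rfl fun i _ => by rw [Prod.smul_snd, smul_eq_mul]
    have hmemP : w.2 ∈ P := by
      refine ⟨Q, fun r => aux_prob_comb t wt hw0 hw1 _, fun r => aux_comb_null t wt _ hSm
        (fun i hi => hζS i hi r), ?_, hval.symm⟩
      rw [hcost]; exact hwε
    rw [hV]
    exact le_csSup hPbdd hmemP
  have hKey : ∀ z ∈ H, z.1 ≤ ε → z.2 ≤ V := by
    intro z hz hzε
    obtain ⟨w, hw, cc, hcc, rfl⟩ := Set.mem_add.mp hz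
    have h1 : (w + cc).1 = w.1 + cc.1 := rfl
    have h2 : (w + cc).2 = w.2 + cc.2 := rfl
    rw [h1] at hzε
    rw [h2]
    have := hKeyConv w hw (by linarith [hcc.1])
    linarith [hcc.2]
  -- base point
  obtain ⟨y₀, hy₀def⟩ : ∃ x : ℝ, x = (1 / (R:ℝ)) * ∑ r : Fin R, f (xhat r) := ⟨_, rfl⟩
  have he₀K : ((0:ℝ), y₀) ∈ K := by
    refine ⟨xhat, fun r => hxhat r, ?_⟩
    show ((1 / (R:ℝ)) * ∑ r : Fin R, c r (xhat r),
      (1 / (R:ℝ)) * ∑ r : Fin R, f (xhat r)) = (((0:ℝ), y₀) : ℝ × ℝ)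
    have : ∑ r : Fin R, c r (xhat r) = 0 :=
      Finset.sum_eq_zero fun r _ => hcx r
    rw [hy₀def, this, mul_zero]
  have he₀H : ((0:ℝ), y₀) ∈ H := hKH he₀K
  have hy₀lb : -M ≤ y₀ := by
    have h1 : ∑ _r : Fin R, (-M) ≤ ∑ r : Fin R, f (xhat r) :=
      Finset.sum_le_sum fun r _ => (abs_le.mp (hM _ (hxhat r))).1
    have h2 : ∑ _r : Fin R, (-M) = (R:ℝ) * (-M) := by
      rw [Finset.sum_const, Finset.card_univ, Fintype.card_fin, nsmul_eq_mul]
    have h3 := mul_le_mul_of_nonneg_left h1 hRinv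
    rw [h2] at h3
    have h4 : (1 / (R:ℝ)) * ((R:ℝ) * (-M)) = -M := by field_simp
    rw [h4] at h3
    rw [hy₀def]
    exact h3
  -- the point (ε, V + δ) is not in the closure of H
  have hp_not : ((ε, V + δ) : ℝ × ℝ) ∉ closure H := by
    intro hmem
    obtain ⟨B', hB'def⟩ : ∃ x : ℝ, x = |V| + δ + 1 + M + 1 := ⟨_, rfl⟩
    have hB'pos : 0 < B' := by
      have := abs_nonneg V
      rw [hB'def]; linarith
    obtain ⟨γ, hγdef⟩ : ∃ x : ℝ, x = min 1 (ε * δ / (4 * B')) := ⟨_, rfl⟩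
    have hγpos : 0 < γ := by rw [hγdef]; exact lt_min one_pos (by positivity)
    have hγle : γ ≤ ε * δ / (4 * B') := by rw [hγdef]; exact min_le_right _ _
    obtain ⟨γ', hγ'def⟩ : ∃ x : ℝ, x = min γ (min (δ / 2) 1) := ⟨_, rfl⟩
    have hγ'pos : 0 < γ' := by rw [hγ'def]; exact lt_min hγpos (lt_min (by linarith) one_pos)
    obtain ⟨z, hzH, hdist⟩ := Metric.mem_closure_iff.mp hmem γ' hγ'pos
    have hd1 : |ε - z.1| < γ' := by
      have h1 : dist (ε, V + δ).1 z.1 ≤ dist ((ε, V + δ) : ℝ × ℝ) z :=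
        le_max_left _ _ |>.trans_eq Prod.dist_eq.symm
      rw [Real.dist_eq] at h1
      exact lt_of_le_of_lt h1 hdist
    have hd2 : |V + δ - z.2| < γ' := by
      have h1 : dist (ε, V + δ).2 z.2 ≤ dist ((ε, V + δ) : ℝ × ℝ) z :=
        le_max_right _ _ |>.trans_eq Prod.dist_eq.symm
      rw [Real.dist_eq] at h1
      exact lt_of_le_of_lt h1 hdist
    have hγ'γ : γ' ≤ γ := by rw [hγ'def]; exact min_le_left _ _
    have hγ'δ : γ' ≤ δ / 2 := by rw [hγ'def]; exact (min_le_right _ _).trans (min_le_left _ _)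
    have hγ'1 : γ' ≤ 1 := by rw [hγ'def]; exact (min_le_right _ _).trans (min_le_right _ _)
    have hz1 : z.1 < ε + γ := by
      have := (abs_lt.mp hd1).1
      linarith
    have hz2lb : V + δ / 2 < z.2 := by
      have := (abs_lt.mp hd2).2
      linarith
    have hz2ub : z.2 < V + δ + 1 := by
      have := (abs_lt.mp hd2).1
      linarith
    obtain ⟨l, hldef⟩ : ∃ x : ℝ, x = γ / (ε + γ) := ⟨_, rfl⟩
    have hl0 : 0 ≤ l := by rw [hldef]; positivity
    have hl1 : l ≤ 1 := by
      rw [hldef, div_le_one (by linarith)]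
      linarith
    have hlB : l * B' ≤ δ / 4 := by
      have h1 : l ≤ γ / ε := by
        rw [hldef]
        exact div_le_div_of_nonneg_left hγpos.le hε (by linarith)
      have h2 : γ / ε ≤ (ε * δ / (4 * B')) / ε := by gcongr
      have h3 : (ε * δ / (4 * B')) / ε = δ / (4 * B') := by
        field_simp
      have h4 : l ≤ δ / (4 * B') := by
        rw [h3] at h2; linarith
      calc l * B' ≤ (δ / (4 * B')) * B' := by
            exact mul_le_mul_of_nonneg_right h4 hB'pos.le
        _ = δ / 4 := by field_simp
    have hmH : l • ((0:ℝ), y₀) + (1 - l) • z ∈ H :=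
      hHconv he₀H hzH hl0 (by linarith) (by ring)
    have hm1 : (l • ((0:ℝ), y₀) + (1 - l) • z).1 = (1 - l) * z.1 := by
      have : (l • ((0:ℝ), y₀) + (1 - l) • z).1 = l * 0 + (1 - l) * z.1 := rfl
      rw [this]; ring
    have hm2 : (l • ((0:ℝ), y₀) + (1 - l) • z).2 = l * y₀ + (1 - l) * z.2 := rfl
    have hm1le : (l • ((0:ℝ), y₀) + (1 - l) • z).1 ≤ ε := by
      rw [hm1]
      have h1 : (1 - l) * z.1 ≤ (1 - l) * (ε + γ) :=
        mul_le_mul_of_nonneg_left hz1.le (by linarith)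
      have h2 : (1 - l) * (ε + γ) = ε := by
        rw [hldef]; field_simp; ring
      linarith
    have hcontra := hKey _ hmH hm1le
    rw [hm2] at hcontra
    -- l * y₀ + (1 - l) * z.2 ≤ V, but it should exceed V
    have hzy : z.2 - y₀ ≤ B' := by
      have h1 : V ≤ |V| := le_abs_self V
      rw [hB'def]; linarith
    have hexp : l * y₀ + (1 - l) * z.2 = z.2 - l * (z.2 - y₀) := by ring
    rw [hexp] at hcontra
    have h5 : l * (z.2 - y₀) ≤ l * B' := by
      rcases le_or_gt (z.2 - y₀) 0 with h | h
      · exact le_trans (by simpa using mul_le_mul_of_nonneg_left h hl0)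
          (mul_nonneg hl0 hB'pos.le)
      · exact mul_le_mul_of_nonneg_left hzy hl0
    linarith
  -- separation
  obtain ⟨L, u, hLH, hLp⟩ :=
    geometric_hahn_banach_closed_point (hHconv.closure) isClosed_closure hp_not
  have hLH' : ∀ z ∈ H, L z < u := fun z hz => hLH z (subset_closure hz)
  obtain ⟨a, hadef⟩ : ∃ x : ℝ, x = L ((1:ℝ), (0:ℝ)) := ⟨_, rfl⟩
  obtain ⟨b, hbdef⟩ : ∃ x : ℝ, x = L ((0:ℝ), (1:ℝ)) := ⟨_, rfl⟩
  have hL : ∀ s t : ℝ, L ((s, t) : ℝ × ℝ) = s * a + t * b := by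
    intro s t
    have h1 : ((s, t) : ℝ × ℝ) = s • ((1:ℝ), (0:ℝ)) + t • ((0:ℝ), (1:ℝ)) := by
      simp [Prod.ext_iff]
    rw [h1, map_add, _root_.map_smul, _root_.map_smul, smul_eq_mul, smul_eq_mul, hadef, hbdef]
  have hLe₀ : L ((0:ℝ), y₀) = y₀ * b := by rw [hL]; ring
  have hue₀ : L ((0:ℝ), y₀) < u := hLH' _ he₀H
  have ha : a ≤ 0 := by
    by_contra har
    push_neg at har
    have hs0 : 0 ≤ (u - L ((0:ℝ), y₀)) / a := by
      apply div_nonneg _ har.le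
      linarith
    have h1 : ((0:ℝ), y₀) + (((u - L ((0:ℝ), y₀)) / a, 0) : ℝ × ℝ) ∈ H :=
      hHadd _ he₀H _ ⟨hs0, le_refl 0⟩
    have h2 := hLH' _ h1
    rw [map_add, hL ((u - L ((0:ℝ), y₀)) / a) 0] at h2
    rw [zero_mul, add_zero, div_mul_cancel₀ _ (ne_of_gt har)] at h2
    linarith
  have hb : 0 ≤ b := by
    by_contra hbr
    push_neg at hbr
    have hs0 : (u - L ((0:ℝ), y₀)) / b ≤ 0 := by
      apply div_nonpos_of_nonneg_of_nonpos _ hbr.le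
      linarith
    have h1 : ((0:ℝ), y₀) + ((0, (u - L ((0:ℝ), y₀)) / b) : ℝ × ℝ) ∈ H :=
      hHadd _ he₀H _ ⟨le_refl 0, hs0⟩
    have h2 := hLH' _ h1
    rw [map_add, hL 0 ((u - L ((0:ℝ), y₀)) / b)] at h2
    rw [zero_mul, zero_add, div_mul_cancel₀ _ (ne_of_lt hbr)] at h2
    linarith
  have hLpt : u < ε * a + (V + δ) * b := by
    have := hLp
    rw [hL ε (V + δ)] at this
    exact this
  have hbpos : 0 < b := by
    rcases eq_or_lt_of_le hb with heq | h
    · exfalso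
      rw [← heq] at hLpt
      rw [← heq, mul_zero] at hLe₀
      rw [hLe₀] at hue₀
      have : ε * a ≤ 0 := mul_nonpos_of_nonneg_of_nonpos hε.le ha
      linarith
    · exact h
  obtain ⟨ρ, hρdef⟩ : ∃ x : ℝ, x = -(a / b) := ⟨_, rfl⟩
  have hρnn : 0 ≤ ρ := by
    rw [hρdef, neg_nonneg]
    exact div_nonpos_of_nonpos_of_nonneg ha hb
  -- on tuples
  have hsup : ∀ ξv : Fin R → X, (∀ r, ξv r ∈ S) →
      (1 / (R:ℝ)) * ∑ r : Fin R, (f (ξv r) - ρ * c r (ξv r)) ≤ u / b := by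
    intro ξv hξv
    have hzK : ((1 / (R:ℝ)) * ∑ r : Fin R, c r (ξv r),
        (1 / (R:ℝ)) * ∑ r : Fin R, f (ξv r)) ∈ K := ⟨ξv, hξv, rfl⟩
    have h1 := hLH' _ (hKH hzK)
    rw [hL] at h1
    have hexp : (1 / (R:ℝ)) * ∑ r : Fin R, (f (ξv r) - ρ * c r (ξv r))
        = ((1 / (R:ℝ)) * ∑ r : Fin R, c r (ξv r)) * a / b
          + (1 / (R:ℝ)) * ∑ r : Fin R, f (ξv r) := by
      rw [Finset.sum_sub_distrib, ← Finset.mul_sum]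
      rw [hρdef]
      field_simp
      ring
    rw [hexp]
    rw [div_add' _ _ _ (ne_of_gt hbpos)]
    rw [div_le_div_iff_of_pos_right hbpos]
    nlinarith
  -- from tuples to the sum of suprema
  have hφsum : (1 / (R:ℝ)) * ∑ r : Fin R, φ ρ r ≤ u / b := by
    refine aux_le_of_forall_pos fun η hη => ?_
    have hch : ∀ r : Fin R, ∃ ξ, ξ ∈ S ∧ φ ρ r - η < f ξ - ρ * c r ξ := by
      intro r
      obtain ⟨y, hy, hlt⟩ := exists_lt_of_lt_csSup (himgne ρ r)
        (show φ ρ r - η < φ ρ r by linarith)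
      obtain ⟨ξ, hξ, rfl⟩ := hy
      exact ⟨ξ, hξ, hlt⟩
    choose ξv hξvS hξvlt using hch
    have h1 := hsup ξv hξvS
    have h2 : ∑ r : Fin R, (φ ρ r - η) ≤ ∑ r : Fin R, (f (ξv r) - ρ * c r (ξv r)) :=
      Finset.sum_le_sum fun r _ => (hξvlt r).le
    have h3 : (1 / (R:ℝ)) * ∑ r : Fin R, (φ ρ r - η)
        = (1 / (R:ℝ)) * ∑ r : Fin R, φ ρ r - η := by
      rw [Finset.sum_sub_distrib, Finset.sum_const, Finset.card_univ, Fintype.card_fin,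
        nsmul_eq_mul]
      field_simp
    have h4 := mul_le_mul_of_nonneg_left h2 hRinv
    rw [h3] at h4
    linarith
  -- conclude
  have hmemDS : ε * ρ + (1 / (R:ℝ)) * ∑ r : Fin R, φ ρ r ∈ DS := ⟨ρ, hρnn, rfl⟩
  have h5 := csInf_le hDbdd hmemDS
  have h6 : ε * ρ + u / b < V + δ := by
    have h7 : u / b < (ε * a + (V + δ) * b) / b :=
      div_lt_div_of_pos_right hLpt hbpos
    have h8 : (ε * a + (V + δ) * b) / b = -(ε * ρ) + (V + δ) := by
      rw [hρdef]
      field_simp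
    rw [h8] at h7
    linarith
  linarith


theorem stmt_11 (n R : ℕ) (hR : 0 < R) (S : Set (Fin n → ℝ)) (hS : S.Nonempty)
    (hSc : IsCompact S) (hSm : MeasurableSet S)
    (xhat : Fin R → (Fin n → ℝ)) (hxhat : ∀ r, xhat r ∈ S)
    (f : (Fin n → ℝ) → ℝ) (hfm : Measurable f)
    (M : ℝ) (hM : ∀ ξ ∈ S, |f ξ| ≤ M) (hfu : UpperSemicontinuousOn f S)
    (ε : ℝ) (hε : 0 < ε) :
    sSup {x : ℝ | ∃ Q : Fin R → Measure (Fin n → ℝ),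
        (∀ r, IsProbabilityMeasure (Q r)) ∧ (∀ r, Q r Sᶜ = 0) ∧
        ((1 / (R : ℝ)) * ∑ r, ∫ ξ, (∑ i, |ξ i - xhat r i|) ∂(Q r) ≤ ε) ∧
        x = (1 / (R : ℝ)) * ∑ r, ∫ ξ, f ξ ∂(Q r)} =
    sInf {x : ℝ | ∃ ρ : ℝ, 0 ≤ ρ ∧
        x = ε * ρ + (1 / (R : ℝ)) * ∑ r,
          sSup ((fun ξ => f ξ - ρ * ∑ i, |ξ i - xhat r i|) '' S)} := by
  obtain ⟨C, hC⟩ := (Metric.isBounded_iff_subset_closedBall 0).mp hSc.isBounded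
  have hnorm : ∀ ξ ∈ S, ∀ i, |ξ i| ≤ max C 0 := by
    intro ξ hξ i
    have h1 : ‖ξ‖ ≤ max C 0 := by
      have := hC hξ
      rw [Metric.mem_closedBall, dist_zero_right] at this
      exact this.trans (le_max_left _ _)
    calc |ξ i| = ‖ξ i‖ := (Real.norm_eq_abs _).symm
      _ ≤ ‖ξ‖ := norm_le_pi_norm ξ i
      _ ≤ max C 0 := h1
  have hcb : ∀ (r : Fin R), ∀ ξ ∈ S, (∑ i, |ξ i - xhat r i|) ≤ (n : ℝ) * (2 * max C 0) := by
    intro r ξ hξ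
    calc ∑ i, |ξ i - xhat r i| ≤ ∑ _i : Fin n, 2 * max C 0 := by
          refine Finset.sum_le_sum fun i _ => ?_
          have h1 := hnorm ξ hξ i
          have h2 := hnorm (xhat r) (hxhat r) i
          calc |ξ i - xhat r i| ≤ |ξ i| + |xhat r i| := abs_sub _ _
            _ ≤ 2 * max C 0 := by linarith
      _ = (n : ℝ) * (2 * max C 0) := by
          rw [Finset.sum_const, Finset.card_univ, Fintype.card_fin, nsmul_eq_mul]
  exact dual_aux R hR S hS hSm xhat hxhat
    (fun r ξ => ∑ i, |ξ i - xhat r i|)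
    (fun r => Finset.measurable_sum _ fun i _ =>
      ((measurable_pi_apply i).sub measurable_const).abs)
    (fun r ξ _ => Finset.sum_nonneg fun i _ => abs_nonneg _)
    ((n : ℝ) * (2 * max C 0)) hcb
    (fun r => by simp)
    f hfm M hM ε hε
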